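/- (Theorem 5 instance: convergence of SR1 Hessian approximations on a subspace.) Let L : ℝⁿ → ℝ be twice continuously differentiable with Hessian ∇²L Lipschitz continuous with constant c₃, and let c₁ ∈ (0,1). Let (wᵏ)ₖ be a sequence in ℝⁿ converging to w*, set sᵏ = wᵏ⁺¹ − wᵏ and yᵏ = ∇L(wᵏ⁺¹) − ∇L(wᵏ), and let symmetric matrices (Hᵏ)ₖ be generated by the symmetric rank-one (SR1) update Hᵏ⁺¹ = Hᵏ + (ρᵏ (ρᵏ)ᵀ)/((ρᵏ)ᵀ sᵏ) with ρᵏ = yᵏ − Hᵏ sᵏ, where at every iteration the skipping condition |(ρᵏ)ᵀ sᵏ| ≥ c₁ ‖sᵏ‖ ‖ρᵏ‖ holds (with (ρᵏ)ᵀsᵏ ≠ 0). Let N ∈ ℝ^{n×q} have orthonormal columns and assume uniform linear independence of the steps in the range of N: there exist c₄ > 0, an integer l ≥ q, and k₀ such that for each k ≥ k₀ there exist q distinct indices k ≤ k¹ < … < k^q ≤ k + l and nonzero vectors v¹, …, v^q ∈ ℝ^q with s^{kʲ} = N vʲ, such that the matrix with columns vʲ/‖vʲ‖ has minimum singular value at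 least c₄. Then lim_{k→∞} ‖(Hᵏ − ∇²L(w*)) N‖ = 0. -/

import Mathlib

open scoped RealInnerProductSpace Matrix Matrix.Norms.L2Operator
open Filter

/-- Multiplication of a matrix with a vector, as a map between Euclidean spaces. -/
noncomputable def matVec {m n : ℕ} (A : Matrix (Fin m) (Fin n) ℝ)
    (v : EuclideanSpace ℝ (Fin n)) : EuclideanSpace ℝ (Fin m) :=
  Matrix.toEuclideanLin A v

/-- Outer product `u vᵀ` of two Euclidean vectors, as a matrix. -/
def outer {m n : ℕ} (u : EuclideanSpace ℝ (Fin m)) (v : EuclideanSpace ℝ (Fin n)) :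
    Matrix (Fin m) (Fin n) ℝ :=
  Matrix.of fun i j => u i * v j

lemma matVec_apply {m n : ℕ} (A : Matrix (Fin m) (Fin n) ℝ) (v : EuclideanSpace ℝ (Fin n))
    (i : Fin m) : matVec A v i = ∑ j, A i j * v j := rfl

lemma inner_eq {m : ℕ} (u v : EuclideanSpace ℝ (Fin m)) : ⟪u, v⟫ = ∑ i, u i * v i := by
  simp [PiLp.inner_apply, RCLike.inner_apply, mul_comm]

lemma matVec_add_left {m n : ℕ} (A B : Matrix (Fin m) (Fin n) ℝ) (v : EuclideanSpace ℝ (Fin n)) :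
    matVec (A + B) v = matVec A v + matVec B v := by
  simp [matVec, map_add]

lemma matVec_sub_left {m n : ℕ} (A B : Matrix (Fin m) (Fin n) ℝ) (v : EuclideanSpace ℝ (Fin n)) :
    matVec (A - B) v = matVec A v - matVec B v := by
  simp [matVec, map_sub]

lemma matVec_smul_left {m n : ℕ} (c : ℝ) (A : Matrix (Fin m) (Fin n) ℝ)
    (v : EuclideanSpace ℝ (Fin n)) : matVec (c • A) v = c • matVec A v := by
  simp [matVec, map_smul]

lemma matVec_smul_right {m n : ℕ} (A : Matrix (Fin m) (Fin n) ℝ) (c : ℝ)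
    (v : EuclideanSpace ℝ (Fin n)) : matVec A (c • v) = c • matVec A v :=
  map_smul (Matrix.toEuclideanLin A) c v

lemma matVec_sum {m n : ℕ} (A : Matrix (Fin m) (Fin n) ℝ) {ι : Type*} (t : Finset ι)
    (f : ι → EuclideanSpace ℝ (Fin n)) :
    matVec A (∑ j ∈ t, f j) = ∑ j ∈ t, matVec A (f j) :=
  map_sum (Matrix.toEuclideanLin A) f t

lemma norm_matVec_le {m n : ℕ} (A : Matrix (Fin m) (Fin n) ℝ) (v : EuclideanSpace ℝ (Fin n)) :
    ‖matVec A v‖ ≤ ‖A‖ * ‖v‖ := by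
  rw [Matrix.l2_opNorm_def]
  exact ((Matrix.toEuclideanLin.trans LinearMap.toContinuousLinearMap) A).le_opNorm v

lemma l2_opNorm_le_of_forall {m n : ℕ} (A : Matrix (Fin m) (Fin n) ℝ) {C : ℝ} (hC : 0 ≤ C)
    (h : ∀ v, ‖matVec A v‖ ≤ C * ‖v‖) : ‖A‖ ≤ C := by
  rw [Matrix.l2_opNorm_def]
  exact ContinuousLinearMap.opNorm_le_bound _ hC h

lemma matVec_mul {m n p : ℕ} (A : Matrix (Fin m) (Fin n) ℝ) (B : Matrix (Fin n) (Fin p) ℝ)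
    (v : EuclideanSpace ℝ (Fin p)) : matVec (A * B) v = matVec A (matVec B v) := by
  ext i
  simp only [matVec_apply, Matrix.mul_apply, Finset.sum_mul, Finset.mul_sum]
  rw [Finset.sum_comm]
  exact Finset.sum_congr rfl fun j _ => Finset.sum_congr rfl fun k _ => by ring

lemma matVec_outer {m n : ℕ} (u : EuclideanSpace ℝ (Fin m)) (v x : EuclideanSpace ℝ (Fin n)) :
    matVec (outer u v) x = ⟪v, x⟫ • u := by
  ext i
  simp only [matVec_apply, outer, Matrix.of_apply, inner_eq, PiLp.smul_apply, smul_eq_mul,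
    Finset.sum_mul, Finset.mul_sum]
  exact Finset.sum_congr rfl fun j _ => by ring

lemma matVec_one {m : ℕ} (v : EuclideanSpace ℝ (Fin m)) : matVec 1 v = v := by
  ext i; simp [matVec_apply, Matrix.one_apply]

lemma inner_matVec_left {m n : ℕ} (A : Matrix (Fin m) (Fin n) ℝ) (u : EuclideanSpace ℝ (Fin n))
    (v : EuclideanSpace ℝ (Fin m)) : ⟪matVec A u, v⟫ = ⟪u, matVec Aᵀ v⟫ := by
  simp only [inner_eq, matVec_apply, Matrix.transpose_apply, Finset.sum_mul, Finset.mul_sum]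
  rw [Finset.sum_comm]
  exact Finset.sum_congr rfl fun j _ => Finset.sum_congr rfl fun i _ => by ring

lemma inner_matVec_symm {m : ℕ} {A : Matrix (Fin m) (Fin m) ℝ} (hA : A.IsSymm)
    (u v : EuclideanSpace ℝ (Fin m)) : ⟪matVec A u, v⟫ = ⟪u, matVec A v⟫ := by
  rw [inner_matVec_left, hA]

lemma norm_matVec_orthonormal {m p : ℕ} {N : Matrix (Fin m) (Fin p) ℝ} (hN : Nᵀ * N = 1)
    (v : EuclideanSpace ℝ (Fin p)) : ‖matVec N v‖ = ‖v‖ := by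
  have h : ⟪matVec N v, matVec N v⟫ = ⟪v, v⟫ := by
    rw [inner_matVec_left, ← matVec_mul, hN, matVec_one]
  rw [real_inner_self_eq_norm_sq, real_inner_self_eq_norm_sq] at h
  nlinarith [norm_nonneg (matVec N v), norm_nonneg v]

lemma abs_coord_le_norm {m : ℕ} (v : EuclideanSpace ℝ (Fin m)) (i : Fin m) : |v i| ≤ ‖v‖ := by
  rw [EuclideanSpace.norm_eq]
  rw [show |v i| = Real.sqrt (v i ^ 2) by rw [Real.sqrt_sq_eq_abs]]
  apply Real.sqrt_le_sqrt
  have := Finset.single_le_sum (f := fun j : Fin m => ‖v j‖ ^ 2) (fun j _ => sq_nonneg _)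
    (Finset.mem_univ i)
  simpa [Real.norm_eq_abs, sq_abs] using this

lemma toEuclideanCLM_apply' {m : ℕ} (A : Matrix (Fin m) (Fin m) ℝ) (v : EuclideanSpace ℝ (Fin m)) :
    Matrix.toEuclideanCLM (𝕜 := ℝ) A v = matVec A v := rfl

lemma surj_of_lb {p : ℕ} (V : Matrix (Fin p) (Fin p) ℝ) {c : ℝ} (hc : 0 < c)
    (h : ∀ x : EuclideanSpace ℝ (Fin p), c * ‖x‖ ≤ ‖matVec V x‖) :
    Function.Surjective (matVec V) := by
  have hinj : Function.Injective (Matrix.toEuclideanLin (𝕜 := ℝ) V) := by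
    rw [← LinearMap.ker_eq_bot, LinearMap.ker_eq_bot']
    intro x hx
    have hx' := h x
    rw [show matVec V x = 0 from hx] at hx'
    simp only [norm_zero] at hx'
    have : ‖x‖ ≤ 0 := by nlinarith
    simpa using le_antisymm this (norm_nonneg x)
  exact LinearMap.injective_iff_surjective.mp hinj

lemma hessian_symm {n : ℕ} (L : EuclideanSpace ℝ (Fin n) → ℝ)
    (g : EuclideanSpace ℝ (Fin n) → EuclideanSpace ℝ (Fin n))
    (hg : ∀ w, HasGradientAt L (g w) w)
    (G : EuclideanSpace ℝ (Fin n) → Matrix (Fin n) (Fin n) ℝ)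
    (hG : ∀ w, HasFDerivAt g (Matrix.toEuclideanCLM (𝕜 := ℝ) (G w)) w)
    (wstar : EuclideanSpace ℝ (Fin n)) (u v : EuclideanSpace ℝ (Fin n)) :
    ⟪matVec (G wstar) u, v⟫ = ⟪u, matVec (G wstar) v⟫ := by
  classical
  let φ : EuclideanSpace ℝ (Fin n) →L[ℝ] (EuclideanSpace ℝ (Fin n) →L[ℝ] ℝ) :=
    (InnerProductSpace.toDual ℝ
      (EuclideanSpace ℝ (Fin n))).toContinuousLinearEquiv.toContinuousLinearMap
  have hφ : ∀ x y : EuclideanSpace ℝ (Fin n), φ x y = ⟪x, y⟫ := fun x y => rfl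
  have hf : ∀ y, HasFDerivAt L (φ (g y)) y := fun y => (hg y).hasFDerivAt
  have hx : HasFDerivAt (fun y => φ (g y))
      (φ.comp (Matrix.toEuclideanCLM (𝕜 := ℝ) (G wstar))) wstar :=
    φ.hasFDerivAt.comp wstar (hG wstar)
  have h2 := second_derivative_symmetric (f := L) hf hx u v
  simp only [ContinuousLinearMap.comp_apply] at h2
  rw [hφ, hφ] at h2
  have h1 : ⟪matVec (G wstar) u, v⟫ = ⟪matVec (G wstar) v, u⟫ := h2
  rw [h1, real_inner_comm]

lemma mvt_bound {n : ℕ}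
    (g : EuclideanSpace ℝ (Fin n) → EuclideanSpace ℝ (Fin n))
    (G : EuclideanSpace ℝ (Fin n) → Matrix (Fin n) (Fin n) ℝ)
    (hG : ∀ w, HasFDerivAt g (Matrix.toEuclideanCLM (𝕜 := ℝ) (G w)) w)
    (c₃ : ℝ) (hc₃ : 0 ≤ c₃) (wstar : EuclideanSpace ℝ (Fin n))
    (hLip : ∀ w₁ w₂, ‖G w₁ - G w₂‖ ≤ c₃ * ‖w₁ - w₂‖)
    (a b : EuclideanSpace ℝ (Fin n)) :
    ‖g b - g a - matVec (G wstar) (b - a)‖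
      ≤ c₃ * (‖a - wstar‖ + ‖b - wstar‖) * ‖b - a‖ := by
  have key := Convex.norm_image_sub_le_of_norm_hasFDerivWithin_le'
    (f := g) (f' := fun z => Matrix.toEuclideanCLM (𝕜 := ℝ) (G z))
    (φ := Matrix.toEuclideanCLM (𝕜 := ℝ) (G wstar))
    (C := c₃ * (‖a - wstar‖ + ‖b - wstar‖)) (s := segment ℝ a b) (x := a) (y := b)
    (fun z _ => (hG z).hasFDerivWithinAt)
    (fun z hz => by
      rw [← map_sub, show ‖Matrix.toEuclideanCLM (𝕜 := ℝ) (G z - G wstar)‖ = ‖G z - G wstar‖ from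
        (Matrix.cstar_norm_def _).symm]
      refine le_trans (hLip z wstar) (mul_le_mul_of_nonneg_left ?_ hc₃)
      obtain ⟨p, r, hp, hr, hpr, hz⟩ := hz
      have hzw : z - wstar = p • (a - wstar) + r • (b - wstar) := by
        have h' : p • (a - wstar) + r • (b - wstar) = (p • a + r • b) - (p + r) • wstar := by
          module
        rw [h', hz, hpr, one_smul]
      rw [hzw]
      refine le_trans (norm_add_le _ _) ?_
      rw [norm_smul, norm_smul, Real.norm_eq_abs, Real.norm_eq_abs, abs_of_nonneg hp,
        abs_of_nonneg hr]
      have hp1 : p ≤ 1 := by linarith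
      have hr1 : r ≤ 1 := by linarith
      nlinarith [norm_nonneg (a - wstar), norm_nonneg (b - wstar)])
    (convex_segment a b) (left_mem_segment ℝ a b) (right_mem_segment ℝ a b)
  exact key


lemma aux_base {c₃ γ a b ns X : ℝ} (hc₃ : 0 ≤ c₃) (hγ : 1 ≤ γ) (ha : 0 ≤ a) (hb : 0 ≤ b)
    (hns : 0 ≤ ns) (h : X ≤ c₃ * (a + b) * ns) : X ≤ c₃ * γ * (a + b) * ns := by
  nlinarith [mul_nonneg (mul_nonneg hc₃ (add_nonneg ha hb)) hns]

lemma aux_div {a b rρ rs c₁ X : ℝ} (hc₁ : 0 < c₁) (hb : 0 < b) (ha : a ≤ rs * X)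
    (hsk : c₁ * rs * rρ ≤ b) (hX : 0 ≤ X) (hrρ : 0 ≤ rρ) (hrs : 0 ≤ rs) :
    1 / b * a * rρ ≤ 1 / c₁ * X := by
  rw [div_mul_eq_mul_div, div_mul_eq_mul_div, one_mul, div_mul_eq_mul_div, one_mul,
    div_le_div_iff₀ hb hc₁]
  have h1 : a * rρ * c₁ ≤ rs * X * (rρ * c₁) := by
    nlinarith [mul_le_mul_of_nonneg_right ha (mul_nonneg hrρ hc₁.le)]
  nlinarith [mul_le_mul_of_nonneg_left hsk hX]

lemma aux_step {c₁ c₃ γ P em Sm dm dm1 ns : ℝ} (hc₁ : 0 < c₁) (hγ : γ = 2 * (1 + 1 / c₁))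
    (hP : γ ≤ P) (hc₃ : 0 ≤ c₃) (hem : 0 ≤ em) (hSm : 0 ≤ Sm) (hdm : 0 ≤ dm) (hdm1 : 0 ≤ dm1)
    (hdmS : dm ≤ Sm) (hns : 0 ≤ ns) (IH : em ≤ c₃ * P * Sm * ns) :
    em + 1 / c₁ * (c₃ * (dm + dm1) * ns + em) ≤ c₃ * (P * γ) * (Sm + dm1) * ns := by
  have hc : 0 < 1 / c₁ := by positivity
  have hβ1 : (1:ℝ) ≤ 1 + 1 / c₁ := by linarith
  have hγ1 : (1:ℝ) ≤ γ := by rw [hγ]; linarith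
  have hP0 : 0 < P := by linarith
  have key1 : em + 1 / c₁ * em ≤ (1 + 1 / c₁) * (c₃ * P * (Sm + dm1) * ns) := by
    have h1 : em ≤ c₃ * P * (Sm + dm1) * ns := by
      nlinarith [mul_nonneg (mul_nonneg hc₃ hP0.le) hns]
    nlinarith
  have key2 : 1 / c₁ * (c₃ * (dm + dm1) * ns)
      ≤ (1 + 1 / c₁) * (c₃ * P * (Sm + dm1) * ns) := by
    have h2β : 2 * (1 / c₁) ≤ (1 + 1 / c₁) * P := by nlinarith
    have hsum : dm + dm1 ≤ 2 * (Sm + dm1) := by linarith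
    have h0 : 0 ≤ Sm + dm1 := by linarith
    have hfac : 1 / c₁ * (dm + dm1) ≤ (1 + 1 / c₁) * P * (Sm + dm1) := by nlinarith
    nlinarith [mul_le_mul_of_nonneg_right hfac (mul_nonneg hc₃ hns)]
  have hrw : c₃ * (P * γ) * (Sm + dm1) * ns = 2 * ((1 + 1 / c₁) * (c₃ * P * (Sm + dm1) * ns)) := by
    rw [hγ]; ring
  linarith [key1, key2]

lemma aux_col {c₃ γa γb S T ns : ℝ} (hc₃ : 0 ≤ c₃) (hγa : 0 ≤ γa) (hγ : γa ≤ γb)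
    (hS : 0 ≤ S) (hT : S ≤ T) (hns : 0 ≤ ns) : c₃ * γa * S * ns ≤ c₃ * γb * T * ns := by
  nlinarith [mul_le_mul hγ hT hS (hγa.trans hγ), mul_nonneg hc₃ hns]

/-- Theorem 5 instance: convergence of the SR1 Hessian approximations to
the exact Hessian `∇²L(w*)` on the range of `N`, under the skipping condition and the
uniform linear independence assumption.  Here `g` is the gradient of `L` and `G w` is the
Hessian matrix of `L` at `w`; "minimum singular value at least `c₄`" is expressed as
`c₄‖x‖ ≤ ‖V x‖` for all `x`. -/
theorem sr1_hessian_convergence_on_nullspace {n q : ℕ}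
    (c₁ c₃ : ℝ) (hc₁0 : 0 < c₁) (hc₁1 : c₁ < 1)
    (L : EuclideanSpace ℝ (Fin n) → ℝ) (hL : ContDiff ℝ 2 L)
    (g : EuclideanSpace ℝ (Fin n) → EuclideanSpace ℝ (Fin n))
    (hg : ∀ w, HasGradientAt L (g w) w)
    (G : EuclideanSpace ℝ (Fin n) → Matrix (Fin n) (Fin n) ℝ)
    (hG : ∀ w, HasFDerivAt g (Matrix.toEuclideanCLM (𝕜 := ℝ) (G w)) w)
    (hLip : ∀ w₁ w₂, ‖G w₁ - G w₂‖ ≤ c₃ * ‖w₁ - w₂‖)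
    (w : ℕ → EuclideanSpace ℝ (Fin n))
    (wstar : EuclideanSpace ℝ (Fin n)) (hconv : Tendsto w atTop (nhds wstar))
    (s : ℕ → EuclideanSpace ℝ (Fin n)) (hs : ∀ k, s k = w (k + 1) - w k)
    (y : ℕ → EuclideanSpace ℝ (Fin n)) (hy : ∀ k, y k = g (w (k + 1)) - g (w k))
    (H : ℕ → Matrix (Fin n) (Fin n) ℝ) (hHsymm : ∀ k, (H k).IsSymm)
    (ρ : ℕ → EuclideanSpace ℝ (Fin n)) (hρ : ∀ k, ρ k = y k - matVec (H k) (s k))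
    (hne : ∀ k, ⟪ρ k, s k⟫ ≠ 0)
    (hskip : ∀ k, c₁ * ‖s k‖ * ‖ρ k‖ ≤ |⟪ρ k, s k⟫|)
    (hupd : ∀ k, H (k + 1) = H k + (1 / ⟪ρ k, s k⟫) • outer (ρ k) (ρ k))
    (N : Matrix (Fin n) (Fin q) ℝ) (hN : Nᵀ * N = 1)
    (c₄ : ℝ) (hc₄ : 0 < c₄) (l k₀ : ℕ) (hl : q ≤ l)
    (hULI : ∀ k, k₀ ≤ k → ∃ ks : Fin q → ℕ, StrictMono ks ∧
      (∀ j, k ≤ ks j ∧ ks j ≤ k + l) ∧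
      ∃ v : Fin q → EuclideanSpace ℝ (Fin q), (∀ j, v j ≠ 0) ∧
        (∀ j, s (ks j) = matVec N (v j)) ∧
        (∀ x : EuclideanSpace ℝ (Fin q),
          c₄ * ‖x‖ ≤ ‖matVec (Matrix.of fun i j => v j i / ‖v j‖) x‖)) :
    Tendsto (fun k => ‖(H k - G wstar) * N‖) atTop (nhds 0) := by
  classical
  -- trivial case `n = 0`
  rcases Nat.eq_zero_or_pos n with hn | hn
  · subst hn
    have hz : ∀ k, (H k - G wstar) * N = 0 := by
      intro k; ext i j; exact i.elim0
    simp only [hz, norm_zero]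
    exact tendsto_const_nhds
  -- `c₃` is nonnegative
  have hc₃ : 0 ≤ c₃ := by
    have h1 := hLip (EuclideanSpace.single (⟨0, hn⟩ : Fin n) (1 : ℝ)) 0
    have h2 : ‖EuclideanSpace.single (⟨0, hn⟩ : Fin n) (1 : ℝ) - 0‖ = 1 := by
      simp [EuclideanSpace.norm_single]
    rw [h2, mul_one] at h1
    exact le_trans (norm_nonneg _) h1
  set Gs := G wstar with hGs
  set d : ℕ → ℝ := fun i => ‖w i - wstar‖ with hd
  have hd0 : ∀ i, 0 ≤ d i := fun i => norm_nonneg _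
  have hdtend : Tendsto d atTop (nhds 0) := by
    have : Tendsto (fun i => w i - wstar) atTop (nhds 0) := by
      rw [← sub_self wstar]
      exact hconv.sub tendsto_const_nhds
    simpa [hd] using this.norm
  set γ : ℝ := 2 * (1 + 1 / c₁) with hγ
  have hβ1 : (1 : ℝ) ≤ 1 + 1 / c₁ := by
    have : 0 < 1 / c₁ := by positivity
    linarith
  have hγ1 : (1 : ℝ) ≤ γ := by rw [hγ]; linarith
  have hγ0 : (0 : ℝ) < γ := by linarith
  have hsne : ∀ k, s k ≠ 0 := by
    intro k hk
    exact hne k (by rw [hk, inner_zero_right])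
  have hρne : ∀ k, ρ k ≠ 0 := by
    intro k hk
    exact hne k (by rw [hk, inner_zero_left])
  have hGsym : ∀ u v, ⟪matVec Gs u, v⟫ = ⟪u, matVec Gs v⟫ :=
    hessian_symm L g hg G hG wstar
  -- mean value bound
  have hB : ∀ k, ‖y k - matVec Gs (s k)‖ ≤ c₃ * (d k + d (k + 1)) * ‖s k‖ := by
    intro k
    rw [hy, hs]
    exact mvt_bound g G hG c₃ hc₃ wstar hLip (w k) (w (k + 1))
  -- secant equation
  have hsec : ∀ k, matVec (H (k + 1)) (s k) = y k := by
    intro k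
    rw [hupd k, matVec_add_left, matVec_smul_left, matVec_outer, smul_smul, one_div,
      inv_mul_cancel₀ (hne k), one_smul, hρ k]
    abel
  -- main induction: growth bound for the error on previous steps
  have hC : ∀ k m, k + 1 ≤ m → ‖matVec (H m - Gs) (s k)‖
      ≤ c₃ * γ ^ (m - k) * (∑ i ∈ Finset.Icc k m, d i) * ‖s k‖ := by
    intro k m hm
    induction m, hm using Nat.le_induction with
    | base =>
      have h1 : matVec (H (k + 1) - Gs) (s k) = y k - matVec Gs (s k) := by
        rw [matVec_sub_left, hsec]
      have h2 : ∑ i ∈ Finset.Icc k (k + 1), d i = d k + d (k + 1) := by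
        rw [Finset.sum_Icc_succ_top (by omega), Finset.Icc_self, Finset.sum_singleton]
      rw [h1, show k + 1 - k = 1 by omega, pow_one, h2]
      exact aux_base hc₃ hγ1 (hd0 k) (hd0 (k + 1)) (norm_nonneg _) (hB k)
    | succ m hm IH =>
      have hem0 : 0 ≤ ‖matVec (H m - Gs) (s k)‖ := norm_nonneg _
      have hSm0 : 0 ≤ ∑ i ∈ Finset.Icc k m, d i := Finset.sum_nonneg fun i _ => hd0 i
      have hdmle : d m ≤ ∑ i ∈ Finset.Icc k m, d i := by
        refine Finset.single_le_sum (fun i _ => hd0 i) ?_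
        simp only [Finset.mem_Icc]; omega
      have hsw : ∀ u v, ⟪matVec (Gs - H m) u, v⟫ = ⟪u, matVec (Gs - H m) v⟫ := by
        intro u v
        rw [matVec_sub_left, matVec_sub_left, inner_sub_left, inner_sub_right,
          hGsym, inner_matVec_symm (hHsymm m)]
      have hρdec : ρ m = (y m - matVec Gs (s m)) + matVec (Gs - H m) (s m) := by
        rw [hρ m, matVec_sub_left]; abel
      have hnormflip : ‖matVec (Gs - H m) (s k)‖ = ‖matVec (H m - Gs) (s k)‖ := by
        have h' : matVec (Gs - H m) (s k) = -(matVec (H m - Gs) (s k)) := by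
          rw [matVec_sub_left, matVec_sub_left]; abel
        rw [h', norm_neg]
      have hinner : |⟪ρ m, s k⟫| ≤ ‖s m‖ *
          (c₃ * (d m + d (m + 1)) * ‖s k‖ + ‖matVec (H m - Gs) (s k)‖) := by
        rw [hρdec, inner_add_left]
        refine le_trans (abs_add_le _ _) ?_
        have t1 : |⟪y m - matVec Gs (s m), s k⟫| ≤ (c₃ * (d m + d (m + 1)) * ‖s m‖) * ‖s k‖ := by
          refine le_trans (abs_real_inner_le_norm _ _) ?_
          exact mul_le_mul_of_nonneg_right (hB m) (norm_nonneg _)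
        have t2 : |⟪matVec (Gs - H m) (s m), s k⟫| ≤ ‖s m‖ * ‖matVec (H m - Gs) (s k)‖ := by
          rw [hsw]
          refine le_trans (abs_real_inner_le_norm _ _) ?_
          rw [hnormflip]
        have hring : ‖s m‖ * (c₃ * (d m + d (m + 1)) * ‖s k‖ + ‖matVec (H m - Gs) (s k)‖)
            = (c₃ * (d m + d (m + 1)) * ‖s m‖) * ‖s k‖
              + ‖s m‖ * ‖matVec (H m - Gs) (s k)‖ := by ring
        linarith [t1, t2]
      have hX0 : 0 ≤ c₃ * (d m + d (m + 1)) * ‖s k‖ + ‖matVec (H m - Gs) (s k)‖ :=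
        add_nonneg (mul_nonneg (mul_nonneg hc₃ (add_nonneg (hd0 m) (hd0 (m + 1))))
          (norm_nonneg _)) hem0
      have hmx : matVec (H (m + 1) - Gs) (s k)
          = matVec (H m - Gs) (s k) + ((1 / ⟪ρ m, s m⟫) * ⟪ρ m, s k⟫) • ρ m := by
        have h' : H (m + 1) - Gs = (H m - Gs) + (1 / ⟪ρ m, s m⟫) • outer (ρ m) (ρ m) := by
          rw [hupd m]; module
        rw [h', matVec_add_left, matVec_smul_left, matVec_outer, smul_smul]
      have hupdnorm : ‖((1 / ⟪ρ m, s m⟫) * ⟪ρ m, s k⟫) • ρ m‖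
          ≤ 1 / c₁ * (c₃ * (d m + d (m + 1)) * ‖s k‖ + ‖matVec (H m - Gs) (s k)‖) := by
        rw [norm_smul, Real.norm_eq_abs, abs_mul, abs_div, abs_one]
        exact aux_div hc₁0 (abs_pos.mpr (hne m)) hinner (hskip m) hX0
          (norm_nonneg _) (norm_nonneg _)
      have hstep : ‖matVec (H (m + 1) - Gs) (s k)‖ ≤ ‖matVec (H m - Gs) (s k)‖
          + 1 / c₁ * (c₃ * (d m + d (m + 1)) * ‖s k‖ + ‖matVec (H m - Gs) (s k)‖) := by
        rw [hmx]
        exact le_trans (norm_add_le _ _) (by linarith [hupdnorm])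
      have hPγ : γ ≤ γ ^ (m - k) := by
        calc γ = γ ^ 1 := (pow_one γ).symm
          _ ≤ γ ^ (m - k) := pow_le_pow_right₀ hγ1 (by omega)
      rw [Finset.sum_Icc_succ_top (show k ≤ m + 1 by omega),
        show m + 1 - k = (m - k) + 1 by omega, pow_succ]
      refine le_trans hstep ?_
      exact aux_step hc₁0 hγ hPγ hc₃ hem0 hSm0 (hd0 m) (hd0 (m + 1)) hdmle
        (norm_nonneg _) IH
  -- final bound using uniform linear independence
  have hKey : ∀ m, k₀ + (l + 1) ≤ m →
      ‖(H m - Gs) * N‖ ≤ (q : ℝ) * (c₃ * γ ^ (l + 1)) / c₄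
        * ∑ i ∈ Finset.Icc (m - (l + 1)) m, d i := by
    intro m hm
    obtain ⟨ks, hksmono, hksb, v, hv0, hsv, hV⟩ := hULI (m - (l + 1)) (by omega)
    have hT0 : 0 ≤ ∑ i ∈ Finset.Icc (m - (l + 1)) m, d i :=
      Finset.sum_nonneg fun i _ => hd0 i
    have hC0 : 0 ≤ c₃ * γ ^ (l + 1) := mul_nonneg hc₃ (le_of_lt (pow_pos hγ0 _))
    have hcol : ∀ j, ‖matVec (H m - Gs) (s (ks j))‖
        ≤ c₃ * γ ^ (l + 1) * (∑ i ∈ Finset.Icc (m - (l + 1)) m, d i) * ‖v j‖ := by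
      intro j
      have hb := hksb j
      have h1 := hC (ks j) m (by omega)
      have e3 : ‖s (ks j)‖ = ‖v j‖ := by rw [hsv j, norm_matVec_orthonormal hN]
      rw [e3] at h1
      refine le_trans h1 ?_
      refine aux_col hc₃ (le_of_lt (pow_pos hγ0 _)) (pow_le_pow_right₀ hγ1 (by omega))
        (Finset.sum_nonneg fun i _ => hd0 i) ?_ (norm_nonneg _)
      exact Finset.sum_le_sum_of_subset_of_nonneg
        (Finset.Icc_subset_Icc hb.1 le_rfl) (fun i _ _ => hd0 i)
    -- operator norm bound
    have hfin : ‖(H m - Gs) * N‖ ≤ (q : ℝ)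
        * (c₃ * γ ^ (l + 1) * (∑ i ∈ Finset.Icc (m - (l + 1)) m, d i)) / c₄ := by
      refine l2_opNorm_le_of_forall ((H m - Gs) * N) ?_ ?_
      · have hq0 : (0:ℝ) ≤ (q:ℝ) := Nat.cast_nonneg q
        have := mul_nonneg hC0 hT0
        positivity
      intro x
      obtain ⟨z, hz⟩ := surj_of_lb _ hc₄ hV x
      have hzn : c₄ * ‖z‖ ≤ ‖x‖ := by rw [← hz]; exact hV z
      have hVz : matVec (Matrix.of fun i j => v j i / ‖v j‖) z
          = ∑ j, (z j / ‖v j‖) • v j := by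
        ext i
        rw [matVec_apply]
        have hrhs : (∑ j, (z j / ‖v j‖) • v j) i = ∑ j, (z j / ‖v j‖) * v j i := by
          rw [WithLp.ofLp_sum, Finset.sum_apply]
          simp [PiLp.smul_apply]
        rw [hrhs]
        exact Finset.sum_congr rfl fun j _ => by simp only [Matrix.of_apply]; ring
      have hx' : matVec ((H m - Gs) * N) x
          = ∑ j, (z j / ‖v j‖) • matVec (H m - Gs) (s (ks j)) := by
        rw [matVec_mul, ← hz, hVz, matVec_sum, matVec_sum]
        refine Finset.sum_congr rfl fun j _ => ?_
        rw [matVec_smul_right, matVec_smul_right, hsv j]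
      rw [hx']
      refine le_trans (norm_sum_le _ _) ?_
      have hterm : ∀ j : Fin q, ‖(z j / ‖v j‖) • matVec (H m - Gs) (s (ks j))‖
          ≤ ‖z‖ * (c₃ * γ ^ (l + 1) * (∑ i ∈ Finset.Icc (m - (l + 1)) m, d i)) := by
        intro j
        have hvpos : (0:ℝ) < ‖v j‖ := norm_pos_iff.mpr (hv0 j)
        rw [norm_smul, Real.norm_eq_abs, abs_div, abs_of_nonneg (norm_nonneg (v j))]
        calc (|z j| / ‖v j‖) * ‖matVec (H m - Gs) (s (ks j))‖
            ≤ (|z j| / ‖v j‖) * (c₃ * γ ^ (l + 1)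
                * (∑ i ∈ Finset.Icc (m - (l + 1)) m, d i) * ‖v j‖) :=
              mul_le_mul_of_nonneg_left (hcol j) (by positivity)
          _ = c₃ * γ ^ (l + 1) * (∑ i ∈ Finset.Icc (m - (l + 1)) m, d i) * |z j| := by
              field_simp
          _ ≤ c₃ * γ ^ (l + 1) * (∑ i ∈ Finset.Icc (m - (l + 1)) m, d i) * ‖z‖ :=
              mul_le_mul_of_nonneg_left (abs_coord_le_norm z j) (mul_nonneg hC0 hT0)
          _ = ‖z‖ * (c₃ * γ ^ (l + 1) * (∑ i ∈ Finset.Icc (m - (l + 1)) m, d i)) := by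
              ring
      refine le_trans (Finset.sum_le_sum (fun j _ => hterm j)) ?_
      rw [Finset.sum_const, Finset.card_univ, Fintype.card_fin, nsmul_eq_mul]
      have hzx : ‖z‖ ≤ ‖x‖ / c₄ := by rw [le_div_iff₀ hc₄]; linarith [hzn]
      have hq0 : (0:ℝ) ≤ (q:ℝ) := Nat.cast_nonneg q
      calc (q:ℝ) * (‖z‖ * (c₃ * γ ^ (l + 1) * (∑ i ∈ Finset.Icc (m - (l + 1)) m, d i)))
          ≤ (q:ℝ) * ((‖x‖ / c₄) * (c₃ * γ ^ (l + 1)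
              * (∑ i ∈ Finset.Icc (m - (l + 1)) m, d i))) := by
            refine mul_le_mul_of_nonneg_left ?_ hq0
            exact mul_le_mul_of_nonneg_right hzx (mul_nonneg hC0 hT0)
        _ = (q:ℝ) * (c₃ * γ ^ (l + 1) * (∑ i ∈ Finset.Icc (m - (l + 1)) m, d i)) / c₄
              * ‖x‖ := by ring
    refine le_trans hfin (le_of_eq ?_)
    ring
  -- pass to the limit
  have hsum_tend : Tendsto (fun m => ∑ i ∈ Finset.Icc (m - (l + 1)) m, d i)
      atTop (nhds 0) := by
    have hEq : (fun m => ∑ i ∈ Finset.Icc (m - (l + 1)) m, d i)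
        =ᶠ[atTop] (fun m => ∑ j ∈ Finset.range (l + 2), d (m - (l + 1) + j)) := by
      filter_upwards [eventually_ge_atTop (l + 1)] with m hm
      rw [← Finset.Ico_add_one_right_eq_Icc, Finset.sum_Ico_eq_sum_range,
        show m + 1 - (m - (l + 1)) = l + 2 by omega]
    have h2 : Tendsto (fun m => ∑ j ∈ Finset.range (l + 2), d (m - (l + 1) + j))
        atTop (nhds 0) := by
      have h3 : ∀ j : ℕ, Tendsto (fun m => d (m - (l + 1) + j)) atTop (nhds 0) := by
        intro j
        have harg : Tendsto (fun m => m - (l + 1) + j) atTop atTop :=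
          tendsto_atTop_atTop.mpr fun b => ⟨b + (l + 1), fun a ha => by omega⟩
        exact hdtend.comp harg
      have := tendsto_finset_sum (Finset.range (l + 2)) (fun j _ => h3 j)
      simpa using this
    exact h2.congr' hEq.symm
  have hDtend : Tendsto (fun m => (q : ℝ) * (c₃ * γ ^ (l + 1)) / c₄
      * ∑ i ∈ Finset.Icc (m - (l + 1)) m, d i) atTop (nhds 0) := by
    have := hsum_tend.const_mul ((q : ℝ) * (c₃ * γ ^ (l + 1)) / c₄)
    simpa using this
  refine squeeze_zero' (Eventually.of_forall fun m => norm_nonneg _) ?_ hDtend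
  filter_upwards [eventually_ge_atTop (k₀ + (l + 1))] with m hm
  exact hKey m hm
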